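/- Let v_{k,i} ∈ S^{d-1} for k ∈ [K], i ∈ [n_k], with block means h_k and π̂_k = n_k/n. Define the modified contrastive loss Ľ(V) = −(1/τ)∑_k π̂_k (∑_{k'} π̂_{k'} α_{k,k'} h_kᵀ h_{k'})/(∑_{k'} π̂_{k'} α_{k,k'}) + (1/n)∑_{k₁,i₁} log((1/n)∑_{k₃,i₃} exp(v_{k₁,i₁}ᵀ v_{k₃,i₃}/τ)). Then Ľ(V) ≥ −(1/τ)∑_k π̂_k (∑_{k'} π̂_{k'} α_{k,k'} h_kᵀ h_{k'})/(∑_{k'} π̂_{k'} α_{k,k'}) + ∑_{k₁} π̂_{k₁} log(∑_{k₃} π̂_{k₃} exp(h_{k₁}ᵀ h_{k₃}/τ)), with equality if v_{k,i} = h_k for all k, i. -/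

import Mathlib

open scoped RealInnerProductSpace
open Finset

/-- Generalized Hölder / log-sum inequality: if `y j` is the weighted geometric
mean of the `x i j` over `i` (with equal weights `1/m`), then
`log (∑ j, p j * y j) ≤ (1/m) * ∑ i, log (∑ j, p j * x i j)`. -/
private lemma holder_log {m : ℕ} (hm : 0 < m) {K : ℕ} (hK : 0 < K)
    (p : Fin K → ℝ) (hp : ∀ j, 0 < p j)
    (x : Fin m → Fin K → ℝ) (hx : ∀ i j, 0 < x i j)
    (y : Fin K → ℝ) (hy : ∀ j, y j = ∏ i, (x i j) ^ ((m : ℝ)⁻¹)) :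
    Real.log (∑ j, p j * y j) ≤ (m : ℝ)⁻¹ * ∑ i, Real.log (∑ j, p j * x i j) := by
  have hmR : (0:ℝ) < m := by exact_mod_cast hm
  set S : Fin m → ℝ := fun i => ∑ j, p j * x i j with hSdef
  have hSpos : ∀ i, 0 < S i :=
    fun i => Finset.sum_pos (fun j _ => mul_pos (hp j) (hx i j)) ⟨⟨0, hK⟩, mem_univ _⟩
  set P : ℝ := ∏ i, (S i) ^ ((m : ℝ)⁻¹) with hPdef
  have hPpos : 0 < P := Finset.prod_pos fun i _ => Real.rpow_pos_of_pos (hSpos i) _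
  have hw1 : ∑ _i : Fin m, (m : ℝ)⁻¹ = 1 := by
    rw [Finset.sum_const, Finset.card_univ, Fintype.card_fin, nsmul_eq_mul]
    field_simp
  have key : ∀ j, y j ≤ P * ∑ i, (m : ℝ)⁻¹ * (x i j / S i) := by
    intro j
    have amgm := Real.geom_mean_le_arith_mean_weighted Finset.univ (fun _ => (m : ℝ)⁻¹)
      (fun i => x i j / S i) (fun i _ => by positivity) hw1
      (fun i _ => div_nonneg (hx i j).le (hSpos i).le)
    have hprod : ∏ i, (x i j / S i) ^ ((m : ℝ)⁻¹) = y j / P := by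
      rw [hy]
      rw [← Finset.prod_div_distrib]
      exact Finset.prod_congr rfl fun i _ => Real.div_rpow (hx i j).le (hSpos i).le _
    rw [hprod] at amgm
    rw [div_le_iff₀ hPpos] at amgm
    calc y j ≤ (∑ i, (m : ℝ)⁻¹ * (x i j / S i)) * P := amgm
      _ = P * ∑ i, (m : ℝ)⁻¹ * (x i j / S i) := mul_comm _ _
  have hsum1 : ∑ j, p j * ∑ i, (m : ℝ)⁻¹ * (x i j / S i) = 1 := by
    have swap : ∑ j, p j * ∑ i, (m : ℝ)⁻¹ * (x i j / S i)
        = ∑ i : Fin m, ∑ j : Fin K, p j * ((m : ℝ)⁻¹ * (x i j / S i)) := by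
      simp_rw [Finset.mul_sum]
      rw [Finset.sum_comm]
    rw [swap]
    have : ∀ i : Fin m, ∑ j : Fin K, p j * ((m : ℝ)⁻¹ * (x i j / S i)) = (m : ℝ)⁻¹ := by
      intro i
      have : ∑ j : Fin K, p j * ((m : ℝ)⁻¹ * (x i j / S i))
          = (m : ℝ)⁻¹ * ((∑ j, p j * x i j) / S i) := by
        rw [Finset.sum_div, Finset.mul_sum]
        exact Finset.sum_congr rfl fun j _ => by ring
      rw [this, div_self (hSpos i).ne', mul_one]
    rw [Finset.sum_congr rfl fun i _ => this i, hw1]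
  have hle : ∑ j, p j * y j ≤ P := by
    calc ∑ j, p j * y j
        ≤ ∑ j, p j * (P * ∑ i, (m : ℝ)⁻¹ * (x i j / S i)) :=
          Finset.sum_le_sum fun j _ => mul_le_mul_of_nonneg_left (key j) (hp j).le
      _ = P * ∑ j, p j * ∑ i, (m : ℝ)⁻¹ * (x i j / S i) := by
          rw [Finset.mul_sum]; exact Finset.sum_congr rfl fun j _ => by ring
      _ = P := by rw [hsum1, mul_one]
  have hypos : ∀ j, 0 < y j := fun j => by
    rw [hy]; exact Finset.prod_pos fun i _ => Real.rpow_pos_of_pos (hx i j) _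
  have hpos : 0 < ∑ j, p j * y j :=
    Finset.sum_pos (fun j _ => mul_pos (hp j) (hypos j)) ⟨⟨0, hK⟩, mem_univ _⟩
  calc Real.log (∑ j, p j * y j) ≤ Real.log P := Real.log_le_log hpos hle
    _ = ∑ i, Real.log ((S i) ^ ((m : ℝ)⁻¹)) :=
        Real.log_prod fun i _ => (Real.rpow_pos_of_pos (hSpos i) _).ne'
    _ = ∑ i, (m : ℝ)⁻¹ * Real.log (S i) :=
        Finset.sum_congr rfl fun i _ => Real.log_rpow (hSpos i) _
    _ = (m : ℝ)⁻¹ * ∑ i, Real.log (S i) := by rw [Finset.mul_sum]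

theorem stmt_9 {d K : ℕ} (n : Fin K → ℕ) (hn : ∀ k, 0 < n k)
    (v : (k : Fin K) → Fin (n k) → EuclideanSpace ℝ (Fin d))
    (hv : ∀ k i, ‖v k i‖ = 1)
    (h : Fin K → EuclideanSpace ℝ (Fin d))
    (hmean : ∀ k, h k = (1 / (n k : ℝ)) • ∑ i, v k i)
    (N : ℕ) (hN : N = ∑ k, n k)
    (pihat : Fin K → ℝ) (hpi : ∀ k, pihat k = (n k : ℝ) / N)
    (α : Fin K → Fin K → ℝ) (hα : ∀ k k', 0 ≤ α k k')
    (hαpos : ∀ k, 0 < ∑ k', pihat k' * α k k')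
    (τ : ℝ) (hτ : 0 < τ)
    (Lcheck : ℝ)
    (hL : Lcheck =
        -(1 / τ) * ∑ k, pihat k *
          ((∑ k', pihat k' * α k k' * ⟪h k, h k'⟫) / (∑ k', pihat k' * α k k'))
        + (1 / (N : ℝ)) * ∑ k₁, ∑ i₁, Real.log
            ((1 / (N : ℝ)) * ∑ k₃, ∑ i₃, Real.exp (⟪v k₁ i₁, v k₃ i₃⟫ / τ))) :
    Lcheck ≥
      -(1 / τ) * ∑ k, pihat k *
        ((∑ k', pihat k' * α k k' * ⟪h k, h k'⟫) / (∑ k', pihat k' * α k k'))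
      + ∑ k₁, pihat k₁ * Real.log (∑ k₃, pihat k₃ * Real.exp (⟪h k₁, h k₃⟫ / τ))
    ∧ ((∀ k i, v k i = h k) →
      Lcheck =
        -(1 / τ) * ∑ k, pihat k *
          ((∑ k', pihat k' * α k k' * ⟪h k, h k'⟫) / (∑ k', pihat k' * α k k'))
        + ∑ k₁, pihat k₁ * Real.log (∑ k₃, pihat k₃ * Real.exp (⟪h k₁, h k₃⟫ / τ))) := by
  rcases Nat.eq_zero_or_pos K with hK0 | hK
  · subst hK0
    simp only [Finset.univ_eq_empty, Finset.sum_empty, mul_zero, add_zero, zero_add,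
      neg_zero, zero_mul] at hL ⊢
    constructor
    · simp [hL]
    · intro _; simp [hL]
  have hN0 : 0 < N := by
    rw [hN]
    exact Finset.sum_pos (fun k _ => hn k) ⟨⟨0, hK⟩, mem_univ _⟩
  have hNr : (0:ℝ) < N := by exact_mod_cast hN0
  have hπpos : ∀ k, 0 < pihat k := fun k => by
    rw [hpi]; exact div_pos (by exact_mod_cast hn k) hNr
  -- block means Tb
  set Tb : EuclideanSpace ℝ (Fin d) → ℝ :=
    fun u => ∑ k₃, pihat k₃ * Real.exp (⟪u, h k₃⟫ / τ) with hTbdef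
  have hTbpos : ∀ u, 0 < Tb u := fun u =>
    Finset.sum_pos (fun j _ => mul_pos (hπpos j) (Real.exp_pos _)) ⟨⟨0, hK⟩, mem_univ _⟩
  -- Step 1: Tb u ≤ full sum
  have step1 : ∀ u : EuclideanSpace ℝ (Fin d),
      Tb u ≤ (1 / (N : ℝ)) * ∑ k₃, ∑ i₃, Real.exp (⟪u, v k₃ i₃⟫ / τ) := by
    intro u
    rw [Finset.mul_sum]
    refine Finset.sum_le_sum fun k₃ _ => ?_
    have hnk : (0:ℝ) < n k₃ := by exact_mod_cast hn k₃
    have hw1 : ∑ _i : Fin (n k₃), ((n k₃ : ℝ))⁻¹ = 1 := by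
      rw [Finset.sum_const, Finset.card_univ, Fintype.card_fin, nsmul_eq_mul]
      field_simp
    have hinner : ⟪u, h k₃⟫ / τ = ∑ i, ((n k₃ : ℝ))⁻¹ • (⟪u, v k₃ i⟫ / τ) := by
      rw [hmean, real_inner_smul_right, inner_sum]
      simp only [smul_eq_mul]
      rw [mul_comm, mul_div_assoc, div_div, Finset.sum_mul]
      exact Finset.sum_congr rfl fun i _ => by field_simp; try ring
    have jensen := convexOn_exp.map_sum_le (t := Finset.univ)
      (w := fun _ : Fin (n k₃) => ((n k₃ : ℝ))⁻¹) (p := fun i => ⟪u, v k₃ i⟫ / τ)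
      (fun i _ => by positivity) hw1 (fun i _ => Set.mem_univ _)
    rw [← hinner] at jensen
    calc pihat k₃ * Real.exp (⟪u, h k₃⟫ / τ)
        ≤ pihat k₃ * ∑ i, ((n k₃ : ℝ))⁻¹ * Real.exp (⟪u, v k₃ i⟫ / τ) :=
          mul_le_mul_of_nonneg_left jensen (hπpos k₃).le
      _ = (1 / (N : ℝ)) * ∑ i₃, Real.exp (⟪u, v k₃ i₃⟫ / τ) := by
          rw [hpi, Finset.mul_sum, Finset.mul_sum]
          exact Finset.sum_congr rfl fun i _ => by field_simp; try ring
  -- Step 2: per-block Hölder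
  have step2 : ∀ k₁ : Fin K,
      Real.log (Tb (h k₁)) ≤ ((n k₁ : ℝ))⁻¹ * ∑ i₁, Real.log (Tb (v k₁ i₁)) := by
    intro k₁
    have hnk : (0:ℝ) < n k₁ := by exact_mod_cast hn k₁
    refine holder_log (hn k₁) hK pihat hπpos
      (fun i j => Real.exp (⟪v k₁ i, h j⟫ / τ)) (fun i j => Real.exp_pos _)
      (fun j => Real.exp (⟪h k₁, h j⟫ / τ)) ?_
    intro j
    show Real.exp (⟪h k₁, h j⟫ / τ)
        = ∏ i, (Real.exp (⟪v k₁ i, h j⟫ / τ)) ^ ((n k₁ : ℝ))⁻¹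
    have : ∀ i : Fin (n k₁), (Real.exp (⟪v k₁ i, h j⟫ / τ)) ^ ((n k₁ : ℝ))⁻¹
        = Real.exp ((⟪v k₁ i, h j⟫ / τ) * ((n k₁ : ℝ))⁻¹) := by
      intro i
      rw [Real.rpow_def_of_pos (Real.exp_pos _), Real.log_exp]
    rw [Finset.prod_congr rfl fun i _ => this i, ← Real.exp_sum]
    congr 1
    rw [hmean, real_inner_smul_left, sum_inner]
    rw [mul_comm, mul_div_assoc, div_div, Finset.sum_mul]
    exact Finset.sum_congr rfl fun i _ => by ring
  -- combine
  have hchain :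
      ∑ k₁, pihat k₁ * Real.log (∑ k₃, pihat k₃ * Real.exp (⟪h k₁, h k₃⟫ / τ))
        ≤ (1 / (N : ℝ)) * ∑ k₁, ∑ i₁, Real.log
            ((1 / (N : ℝ)) * ∑ k₃, ∑ i₃, Real.exp (⟪v k₁ i₁, v k₃ i₃⟫ / τ)) := by
    calc ∑ k₁, pihat k₁ * Real.log (Tb (h k₁))
        ≤ ∑ k₁, pihat k₁ * (((n k₁ : ℝ))⁻¹ * ∑ i₁, Real.log (Tb (v k₁ i₁))) :=
          Finset.sum_le_sum fun k₁ _ =>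
            mul_le_mul_of_nonneg_left (step2 k₁) (hπpos k₁).le
      _ = (1 / (N : ℝ)) * ∑ k₁, ∑ i₁, Real.log (Tb (v k₁ i₁)) := by
          rw [Finset.mul_sum]
          refine Finset.sum_congr rfl fun k₁ _ => ?_
          have hnk : ((n k₁ : ℝ)) ≠ 0 := by exact_mod_cast (hn k₁).ne'
          rw [hpi]; field_simp
      _ ≤ (1 / (N : ℝ)) * ∑ k₁, ∑ i₁, Real.log
            ((1 / (N : ℝ)) * ∑ k₃, ∑ i₃, Real.exp (⟪v k₁ i₁, v k₃ i₃⟫ / τ)) := by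
          refine mul_le_mul_of_nonneg_left ?_ (by positivity)
          refine Finset.sum_le_sum fun k₁ _ => Finset.sum_le_sum fun i₁ _ => ?_
          exact Real.log_le_log (hTbpos _) (step1 _)
  constructor
  · rw [hL]
    have := hchain
    linarith
  · intro hveq
    rw [hL]
    congr 1
    have inner_eq : ∀ k₁ : Fin K,
        (1 / (N : ℝ)) * ∑ k₃, ∑ _i₃ : Fin (n k₃), Real.exp (⟪h k₁, h k₃⟫ / τ)
          = ∑ k₃, pihat k₃ * Real.exp (⟪h k₁, h k₃⟫ / τ) := by
      intro k₁
      rw [Finset.mul_sum]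
      refine Finset.sum_congr rfl fun k₃ _ => ?_
      rw [Finset.sum_const, Finset.card_univ, Fintype.card_fin, nsmul_eq_mul, hpi]
      ring
    calc (1 / (N : ℝ)) * ∑ k₁, ∑ i₁, Real.log
            ((1 / (N : ℝ)) * ∑ k₃, ∑ i₃, Real.exp (⟪v k₁ i₁, v k₃ i₃⟫ / τ))
        = (1 / (N : ℝ)) * ∑ k₁, ∑ _i₁ : Fin (n k₁), Real.log
            (∑ k₃, pihat k₃ * Real.exp (⟪h k₁, h k₃⟫ / τ)) := by
          congr 1
          refine Finset.sum_congr rfl fun k₁ _ => Finset.sum_congr rfl fun i₁ _ => ?_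
          simp only [hveq]
          rw [inner_eq k₁]
      _ = ∑ k₁, pihat k₁ * Real.log (∑ k₃, pihat k₃ * Real.exp (⟪h k₁, h k₃⟫ / τ)) := by
          rw [Finset.mul_sum]
          refine Finset.sum_congr rfl fun k₁ _ => ?_
          rw [Finset.sum_const, Finset.card_univ, Fintype.card_fin, nsmul_eq_mul, hpi]
          ring
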